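/- Let X be a separable infinite-dimensional complex Banach space, let S be a bounded linear operator on X that is a generalised backward ∞-shift adapted to a family of linearly independent vectors {x^ℓ_k : ℓ ≥ 1, k ≥ 1} with dense linear span, and let λ ∈ ℂ with |λ| = 1. Then λI + S is mixing. -/

import Mathlib

open Filter Polynomial Finset Matrix Topology

namespace Stmt6Aux

lemma choose_div_pow_tendsto (k : ℕ) :
    Tendsto (fun n : ℕ => ((n.choose k : ℂ)) / (n : ℂ) ^ k) atTop
      (𝓝 (1 / (k.factorial : ℂ))) := by
  have key : ∀ᶠ n : ℕ in atTop, ((n.choose k : ℂ)) / (n : ℂ) ^ k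
      = (∏ i ∈ Finset.range k, (1 - (i : ℂ) / n)) / (k.factorial : ℂ) := by
    filter_upwards [eventually_ge_atTop (max k 1)] with n hn
    have hk : k ≤ n := le_trans (le_max_left _ _) hn
    have hn1 : 1 ≤ n := le_trans (le_max_right _ _) hn
    have hn0 : (n : ℂ) ≠ 0 := by
      exact Nat.cast_ne_zero.mpr (by omega)
    have e1 : (k.factorial : ℂ) * (n.choose k : ℂ) = ∏ i ∈ Finset.range k, ((n : ℂ) - i) := by
      calc (k.factorial : ℂ) * (n.choose k : ℂ)
          = ((k.factorial * n.choose k : ℕ) : ℂ) := by push_cast; ring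
        _ = ((n.descFactorial k : ℕ) : ℂ) := by
            rw [Nat.descFactorial_eq_factorial_mul_choose]
        _ = ((∏ i ∈ Finset.range k, (n - i) : ℕ) : ℂ) := by
            rw [Nat.descFactorial_eq_prod_range]
        _ = ∏ i ∈ Finset.range k, ((n : ℂ) - i) := by
            push_cast [Nat.cast_prod]
            refine Finset.prod_congr rfl fun i hi => ?_
            have : i ≤ n := le_trans (Nat.le_of_lt (Finset.mem_range.mp hi)) hk
            push_cast [Nat.cast_sub this]
            ring
    have e2 : ∏ i ∈ Finset.range k, (1 - (i : ℂ) / n)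
        = (∏ i ∈ Finset.range k, ((n : ℂ) - i)) / (n : ℂ) ^ k := by
      have hpc : (n : ℂ) ^ k = ∏ _i ∈ Finset.range k, (n : ℂ) := by
        rw [Finset.prod_const, Finset.card_range]
      rw [hpc, ← Finset.prod_div_distrib]
      refine Finset.prod_congr rfl fun i _ => ?_
      field_simp
    have hfac : (k.factorial : ℂ) ≠ 0 := by
      exact_mod_cast Nat.factorial_ne_zero k
    rw [e2, ← e1]
    field_simp
  refine Tendsto.congr' (key.mono fun n e => e.symm) ?_
  have h1 : Tendsto (fun n : ℕ => ∏ i ∈ Finset.range k, (1 - (i : ℂ) / n)) atTop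
      (𝓝 (∏ _i ∈ Finset.range k, (1 : ℂ))) := by
    refine tendsto_finset_prod _ fun i _ => ?_
    have : Tendsto (fun n : ℕ => (i : ℂ) / n) atTop (𝓝 0) := by
      have hr : Tendsto (fun n : ℕ => ((i : ℝ) / n)) atTop (𝓝 0) :=
        tendsto_const_div_atTop_nhds_zero_nat _
      have h2 := (Complex.continuous_ofReal.tendsto 0).comp hr
      have h3 : (Complex.ofReal ∘ fun n : ℕ => ((i : ℝ) / n)) = fun n : ℕ => (i : ℂ) / n := by
        funext n; simp [Function.comp]
      rw [h3] at h2
      simpa using h2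
    simpa using (tendsto_const_nhds (x := (1:ℂ))).sub this
  simpa using h1.div_const (k.factorial : ℂ)

lemma tendsto_det {m : ℕ} (A : ℕ → Matrix (Fin m) (Fin m) ℂ) (B : Matrix (Fin m) (Fin m) ℂ)
    (hA : ∀ i j, Tendsto (fun n => A n i j) atTop (𝓝 (B i j))) :
    Tendsto (fun n => (A n).det) atTop (𝓝 B.det) := by
  simp_rw [Matrix.det_apply']
  exact tendsto_finset_sum _ fun σ _ =>
    (tendsto_finset_prod _ fun i _ => hA (σ i) i).const_mul _

lemma Hdet_ne_zero (h : ℕ) :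
    (Matrix.of fun s r : Fin h =>
      (1 : ℂ) / ((s.1 + r.1 + 1).factorial : ℂ)).det ≠ 0 := by
  set H : Matrix (Fin h) (Fin h) ℂ :=
    Matrix.of fun s r : Fin h => (1 : ℂ) / ((s.1 + r.1 + 1).factorial : ℂ) with hH
  intro hdet
  obtain ⟨v, hv0, hv⟩ := (Matrix.exists_mulVec_eq_zero_iff).mpr hdet
  set p : ℂ[X] := ∑ r : Fin h, Polynomial.C (v r) * descPochhammer ℂ (h - 1 - r.1) with hp
  have hdeg : p.natDegree ≤ h - 1 := by
    refine natDegree_sum_le_of_forall_le _ _ fun r _ => ?_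
    refine le_trans (natDegree_C_mul_le _ _) ?_
    rw [descPochhammer_natDegree]
    omega
  have heval : ∀ s : Fin h, p.eval ((h + s.1 : ℕ) : ℂ) = 0 := by
    intro s
    have hrow : ∑ r : Fin h, H s r * v r = 0 := by
      have := congrFun hv s
      simpa [Matrix.mulVec, dotProduct] using this
    have e1 : p.eval ((h + s.1 : ℕ) : ℂ)
        = ∑ r : Fin h, v r * ((h + s.1).descFactorial (h - 1 - r.1) : ℂ) := by
      rw [hp, eval_finset_sum]
      refine Finset.sum_congr rfl fun r _ => ?_
      rw [eval_mul, eval_C, descPochhammer_eval_eq_descFactorial]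
    have e2 : ∀ r : Fin h, ((h + s.1).descFactorial (h - 1 - r.1) : ℂ)
        = ((h + s.1).factorial : ℂ) / ((s.1 + r.1 + 1).factorial : ℂ) := by
      intro r
      have hle : h - 1 - r.1 ≤ h + s.1 := by omega
      have hsub : h + s.1 - (h - 1 - r.1) = s.1 + r.1 + 1 := by omega
      have := Nat.descFactorial_eq_factorial_mul_choose (h + s.1) (h - 1 - r.1)
      have hc := Nat.choose_mul_factorial_mul_factorial hle
      rw [hsub] at hc
      have hfac : ((s.1 + r.1 + 1).factorial : ℂ) ≠ 0 := by
        exact_mod_cast Nat.factorial_ne_zero _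
      field_simp
      calc ((h + s.1).descFactorial (h - 1 - r.1) : ℂ) * ((s.1 + r.1 + 1).factorial : ℂ)
          = (((h + s.1).descFactorial (h - 1 - r.1)) * ((s.1 + r.1 + 1).factorial) : ℕ) := by
            push_cast; ring
        _ = ((h + s.1).factorial : ℕ) := by
            congr 1
            rw [this]
            calc (h - 1 - r.1).factorial * (h + s.1).choose (h - 1 - r.1) * (s.1 + r.1 + 1).factorial
                = (h + s.1).choose (h - 1 - r.1) * (h - 1 - r.1).factorial * (s.1 + r.1 + 1).factorial := by ring
              _ = (h + s.1).factorial := hc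
        _ = ((h + s.1).factorial : ℂ) := by push_cast; ring
    rw [e1]
    have : ∑ r : Fin h, v r * ((h + s.1).descFactorial (h - 1 - r.1) : ℂ)
        = ((h + s.1).factorial : ℂ) * ∑ r : Fin h, H s r * v r := by
      rw [Finset.mul_sum]
      refine Finset.sum_congr rfl fun r _ => ?_
      rw [e2 r, hH]
      simp only [Matrix.of_apply]
      ring
    rw [this, hrow, mul_zero]
  have hp0 : p = 0 := by
    classical
    refine eq_zero_of_natDegree_lt_card_of_eval_eq_zero' p
      ((Finset.range h).image fun s => ((h + s : ℕ) : ℂ)) ?_ ?_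
    · intro z hz
      obtain ⟨s, hs, rfl⟩ := Finset.mem_image.mp hz
      exact heval ⟨s, Finset.mem_range.mp hs⟩
    · have hcard : ((Finset.range h).image fun s => ((h + s : ℕ) : ℂ)).card = h := by
        rw [Finset.card_image_of_injective _ ?_, Finset.card_range]
        intro a b hab
        simp only at hab
        have : (h + a : ℕ) = (h + b : ℕ) := by exact_mod_cast hab
        omega
      rw [hcard]
      have h0 : 0 < h := by
        rcases Nat.eq_zero_or_pos h with h0 | h0
        · exfalso; apply hv0; funext r
          exact absurd (lt_of_lt_of_le r.2 (le_of_eq h0)) (Nat.not_lt_zero _)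
        · exact h0
      omega
  have hvz : ∀ t : ℕ, ∀ ht : t < h, v ⟨t, ht⟩ = 0 := by
    intro t
    induction t using Nat.strong_induction_on with
    | _ t IH =>
      intro ht
      have hc : p.coeff (h - 1 - t) = 0 := by rw [hp0]; simp
      rw [hp, finset_sum_coeff] at hc
      have hterm : ∀ r : Fin h,
          (Polynomial.C (v r) * descPochhammer ℂ (h - 1 - r.1)).coeff (h - 1 - t)
          = if r.1 = t then v r else 0 := by
        intro r
        rw [coeff_C_mul]
        rcases lt_trichotomy r.1 t with hlt | heq | hgt
        · rw [IH r.1 hlt r.2]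
          simp
        · have : h - 1 - r.1 = h - 1 - t := by omega
          rw [if_pos heq, this]
          have hm : (descPochhammer ℂ (h - 1 - t)).coeff (h - 1 - t) = 1 := by
            have hmon := monic_descPochhammer ℂ (n := h - 1 - t)
            have hd := descPochhammer_natDegree (R := ℂ) (h - 1 - t)
            have := hmon.coeff_natDegree
            rwa [hd] at this
          rw [hm, mul_one]
        · have hdlt : (descPochhammer ℂ (h - 1 - r.1)).natDegree < h - 1 - t := by
            rw [descPochhammer_natDegree]
            omega
          rw [coeff_eq_zero_of_natDegree_lt hdlt, mul_zero, if_neg (by omega)]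
      rw [Finset.sum_congr rfl fun r _ => hterm r] at hc
      have : ∑ r : Fin h, (if r.1 = t then v r else 0) = v ⟨t, ht⟩ := by
        rw [Finset.sum_eq_single (⟨t, ht⟩ : Fin h)]
        · simp
        · intro r _ hr
          refine if_neg fun he => hr ?_
          exact Fin.ext he
        · intro habs; exact absurd (Finset.mem_univ _) habs
      rw [this] at hc
      exact hc
  apply hv0
  funext r
  exact hvz r.1 r.2

lemma key (h : ℕ) (b : ℕ → Fin h → ℂ) (b0 : Fin h → ℂ)
    (hb : ∀ s, Tendsto (fun n => b n s) atTop (𝓝 (b0 s))) :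
    ∃ (z : ℕ → Fin h → ℂ) (K : ℝ) (N : ℕ), ∀ n ≥ N,
      (∀ s : Fin h, ∑ r : Fin h,
          (n.choose (s.1 + r.1 + 1) : ℂ) * (z n r / (n : ℂ) ^ (r.1 + 1))
          = (n : ℂ) ^ (s.1) * b n s) ∧ (∀ r, ‖z n r‖ ≤ K) := by
  classical
  set H : Matrix (Fin h) (Fin h) ℂ :=
    Matrix.of fun s r : Fin h => (1 : ℂ) / ((s.1 + r.1 + 1).factorial : ℂ) with hHdef
  set A : ℕ → Matrix (Fin h) (Fin h) ℂ :=
    fun n => Matrix.of fun s r : Fin h =>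
      (n.choose (s.1 + r.1 + 1) : ℂ) / (n : ℂ) ^ (s.1 + r.1 + 1) with hAdef
  have hAH : ∀ s r : Fin h, Tendsto (fun n => A n s r) atTop (𝓝 (H s r)) := by
    intro s r
    simpa [hAdef, hHdef] using choose_div_pow_tendsto (s.1 + r.1 + 1)
  have hdet : Tendsto (fun n => (A n).det) atTop (𝓝 H.det) := tendsto_det _ _ hAH
  have hH0 : H.det ≠ 0 := Hdet_ne_zero h
  set z : ℕ → Fin h → ℂ := fun n => (A n)⁻¹.mulVec (b n) with hzdef
  have hinv : ∀ (M : Matrix (Fin h) (Fin h) ℂ) (c : Fin h → ℂ) (r : Fin h),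
      M⁻¹.mulVec c r
      = (M.det)⁻¹ * ∑ j, (M.updateRow j (Pi.single r 1)).det * c j := by
    intro M c r
    rw [Matrix.inv_def]
    simp only [Matrix.mulVec, dotProduct, Matrix.smul_apply, smul_eq_mul,
      Matrix.adjugate_apply, Ring.inverse_eq_inv', Finset.mul_sum]
    exact Finset.sum_congr rfl fun j _ => by ring
  have hz : ∀ r, Tendsto (fun n => z n r) atTop (𝓝 (H⁻¹.mulVec b0 r)) := by
    intro r
    have e : ∀ n, z n r = ((A n).det)⁻¹
        * ∑ j, ((A n).updateRow j (Pi.single r 1)).det * b n j := fun n => hinv _ _ _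
    rw [show H⁻¹.mulVec b0 r = (H.det)⁻¹
        * ∑ j, (H.updateRow j (Pi.single r 1)).det * b0 j from hinv _ _ _]
    simp_rw [e]
    refine Tendsto.mul (hdet.inv₀ hH0) (tendsto_finset_sum _ fun j _ => Tendsto.mul ?_ (hb j))
    refine tendsto_det _ _ fun i jj => ?_
    rcases eq_or_ne i j with rfl | hij
    · simpa [Matrix.updateRow_apply] using tendsto_const_nhds
    · simpa [Matrix.updateRow_apply, hij] using hAH i jj
  set L : Fin h → ℂ := H⁻¹.mulVec b0 with hLdef
  set K : ℝ := (∑ r, ‖L r‖) + 1 with hKdef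
  have hKr : ∀ r : Fin h, ‖L r‖ < K := by
    intro r
    have h1 : ‖L r‖ ≤ ∑ r', ‖L r'‖ :=
      Finset.single_le_sum (f := fun r' => ‖L r'‖) (fun _ _ => norm_nonneg _)
        (Finset.mem_univ r)
    linarith
  have hev : ∀ᶠ n in atTop,
      ((A n).det ≠ 0 ∧ 1 ≤ n) ∧ ∀ r, ‖z n r‖ ≤ K := by
    refine ((hdet.eventually_ne hH0).and (eventually_ge_atTop 1)).and ?_
    exact Filter.eventually_all.mpr fun r =>
      (hz r).norm.eventually (eventually_le_nhds (hKr r))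
  obtain ⟨N, hN⟩ := eventually_atTop.mp hev
  refine ⟨z, K, N, fun n hn => ⟨?_, (hN n hn).2⟩⟩
  obtain ⟨⟨hdn, hn1⟩, _⟩ := hN n hn
  have hn0 : (n : ℂ) ≠ 0 := Nat.cast_ne_zero.mpr (by omega)
  have hsolve : (A n).mulVec (z n) = b n := by
    rw [hzdef]
    simp only
    rw [Matrix.mulVec_mulVec, Matrix.mul_nonsing_inv _ (isUnit_iff_ne_zero.mpr hdn),
      Matrix.one_mulVec]
  intro s
  have hrow : ∑ r, A n s r * z n r = b n s := by
    have := congrFun hsolve s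
    simpa [Matrix.mulVec, dotProduct] using this
  calc ∑ r : Fin h, (n.choose (s.1 + r.1 + 1) : ℂ) * (z n r / (n : ℂ) ^ (r.1 + 1))
      = ∑ r : Fin h, (n : ℂ) ^ (s.1) * (A n s r * z n r) := by
        refine Finset.sum_congr rfl fun r _ => ?_
        rw [hAdef]
        simp only [Matrix.of_apply]
        have hsplit : (n : ℂ) ^ (s.1 + r.1 + 1) = (n : ℂ) ^ (s.1) * (n : ℂ) ^ (r.1 + 1) := by
          rw [show s.1 + r.1 + 1 = s.1 + (r.1 + 1) by omega, pow_add]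
        rw [hsplit]
        field_simp
        try ring
    _ = (n : ℂ) ^ (s.1) * b n s := by rw [← Finset.mul_sum, hrow]

lemma tower {X : Type*} [NormedAddCommGroup X] [NormedSpace ℂ X]
    (S : X →L[ℂ] X) (lam : ℂ) (hlam : ‖lam‖ = 1)
    (h : ℕ) (hh : 0 < h) (y : X) (hy : (S ^ (2 * h)) y = 0) :
    (∃ w : ℕ → X, Tendsto w atTop (𝓝 ((S ^ h) y)) ∧
      Tendsto (fun n => ((lam • (1 : X →L[ℂ] X) + S) ^ n) (w n)) atTop (𝓝 0)) ∧
    (∃ w : ℕ → X, Tendsto w atTop (𝓝 0) ∧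
      Tendsto (fun n => ((lam • (1 : X →L[ℂ] X) + S) ^ n) (w n)) atTop
        (𝓝 ((S ^ h) y))) := by
  classical
  have hlam0 : lam ≠ 0 := by
    intro e; rw [e, norm_zero] at hlam; norm_num at hlam
  set T : X →L[ℂ] X := lam • (1 : X →L[ℂ] X) + S with hT
  set g : ℕ → X := fun d => (S ^ d) y with hg
  have hg2h : ∀ d, 2 * h ≤ d → g d = 0 := by
    intro d hd
    have e1 : (S ^ d) y = (S ^ (d - 2*h)) ((S ^ (2*h)) y) := by
      rw [← ContinuousLinearMap.mul_apply, ← pow_add]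
      congr 2
      omega
    show (S ^ d) y = 0
    rw [e1, hy, map_zero]
  have hgS : ∀ d, S (g d) = g (d+1) := by
    intro d
    show S ((S ^ d) y) = (S ^ (d+1)) y
    rw [pow_succ', ContinuousLinearMap.mul_apply]
  set Φ : ℂ[X] → X := fun q => ∑ d ∈ Finset.range (2*h), q.coeff d • g d with hΦ
  have hΦadd : ∀ q1 q2, Φ (q1 + q2) = Φ q1 + Φ q2 := by
    intro q1 q2
    show ∑ d ∈ Finset.range (2*h), (q1+q2).coeff d • g d = _
    simp only [coeff_add, add_smul]
    rw [Finset.sum_add_distrib]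
  have hΦsmul : ∀ (a : ℂ) q, Φ (Polynomial.C a * q) = a • Φ q := by
    intro a q
    show ∑ d ∈ Finset.range (2*h), (Polynomial.C a * q).coeff d • g d = _
    simp only [coeff_C_mul]
    rw [Finset.smul_sum]
    exact Finset.sum_congr rfl fun d _ => by rw [smul_smul]
  have hΦX : ∀ q, Φ (Polynomial.X * q) = S (Φ q) := by
    intro q
    show ∑ d ∈ Finset.range (2*h), (Polynomial.X * q).coeff d • g d
        = S (∑ d ∈ Finset.range (2*h), q.coeff d • g d)
    rw [map_sum]
    simp only [_root_.map_smul, hgS]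
    obtain ⟨m, hm⟩ : ∃ m, 2*h = m + 1 := ⟨2*h - 1, by omega⟩
    rw [hm, Finset.sum_range_succ', Finset.sum_range_succ]
    have hc0 : (Polynomial.X * q).coeff 0 • g 0 = 0 := by
      have : (Polynomial.X * q).coeff 0 = 0 := by
        rw [Polynomial.mul_coeff_zero, Polynomial.coeff_X_zero, zero_mul]
      rw [this, zero_smul]
    have hgm : g (m+1) = 0 := hg2h _ (by omega)
    simp only [Polynomial.coeff_X_mul, hc0, hgm, smul_zero, add_zero]
  have hΦT : ∀ q, Φ ((Polynomial.X + Polynomial.C lam) * q) = T (Φ q) := by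
    intro q
    rw [add_mul, hΦadd, hΦX, hΦsmul, hT]
    rw [ContinuousLinearMap.add_apply, ContinuousLinearMap.smul_apply,
      ContinuousLinearMap.one_apply]
    abel
  have hΦTn : ∀ (n : ℕ) (q : ℂ[X]),
      (T ^ n) (Φ q) = Φ ((Polynomial.X + Polynomial.C lam) ^ n * q) := by
    intro n
    induction n with
    | zero => intro q; simp
    | succ n IH =>
      intro q
      rw [pow_succ, ContinuousLinearMap.mul_apply, ← hΦT q, IH]
      congr 1
      ring
  set G : ℝ := ∑ d ∈ Finset.range (2*h), ‖g d‖ with hGdef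
  have hG0 : 0 ≤ G := Finset.sum_nonneg fun _ _ => norm_nonneg _
  have hbound : ∀ (q : ℂ[X]) (c : ℂ) (B : ℝ),
      (∀ d, d < 2*h → ‖q.coeff d - (if d = h then c else 0)‖ ≤ B) →
      ‖Φ q - c • g h‖ ≤ B * G := by
    intro q c B hB
    have hrep : c • g h = ∑ d ∈ Finset.range (2*h), (if d = h then c else 0) • g d := by
      have e1 : ∀ d, (if d = h then c else 0) • g d = if d = h then c • g d else 0 :=
        fun d => by split_ifs <;> simp
      simp_rw [e1]
      rw [Finset.sum_ite_eq' (Finset.range (2*h)) h (fun d => c • g d),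
        if_pos (Finset.mem_range.mpr (by omega))]
    show ‖(∑ d ∈ Finset.range (2*h), q.coeff d • g d) - c • g h‖ ≤ B * G
    rw [hrep, ← Finset.sum_sub_distrib]
    refine le_trans (norm_sum_le _ _) ?_
    have : ∀ d ∈ Finset.range (2*h),
        ‖q.coeff d • g d - (if d = h then c else 0) • g d‖ ≤ B * ‖g d‖ := by
      intro d hd
      rw [← sub_smul, norm_smul]
      exact mul_le_mul_of_nonneg_right (hB d (Finset.mem_range.mp hd)) (norm_nonneg _)
    refine le_trans (Finset.sum_le_sum this) ?_
    rw [hGdef, ← Finset.mul_sum]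
  -- coefficients of combinations
  have hcomb : ∀ (a : Fin h → ℂ) (e : ℕ),
      (∑ r : Fin h, Polynomial.C (a r) * Polynomial.X ^ (h-1-r.1)).coeff e
      = ∑ r : Fin h, (if h-1-r.1 = e then a r else 0) := by
    intro a e
    rw [finset_sum_coeff]
    refine Finset.sum_congr rfl fun r _ => ?_
    rw [coeff_C_mul, Polynomial.coeff_X_pow]
    by_cases he : e = h-1-r.1
    · rw [if_pos he, if_pos he.symm, mul_one]
    · rw [if_neg he, if_neg (Ne.symm he), mul_zero]
  have hcomb_lt : ∀ (a : Fin h → ℂ) (e : ℕ), e < h →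
      (∑ r : Fin h, Polynomial.C (a r) * Polynomial.X ^ (h-1-r.1)).coeff e
      = a ⟨h-1-e, by omega⟩ := by
    intro a e he
    rw [hcomb]
    rw [Finset.sum_eq_single (⟨h-1-e, by omega⟩ : Fin h)]
    · rw [if_pos (by simp only; omega)]
    · intro r _ hr
      refine if_neg fun hsr => hr ?_
      have hr2 := r.2
      exact Fin.ext (by simp only; omega)
    · intro habs; exact absurd (Finset.mem_univ _) habs
  have hcomb_ge : ∀ (a : Fin h → ℂ) (e : ℕ), h ≤ e →
      (∑ r : Fin h, Polynomial.C (a r) * Polynomial.X ^ (h-1-r.1)).coeff e = 0 := by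
    intro a e he
    rw [hcomb]
    refine Finset.sum_eq_zero fun r _ => if_neg (by omega)
  have hmulcomb : ∀ (Q : ℂ[X]) (a : Fin h → ℂ) (d : ℕ),
      (Q * ∑ r : Fin h, Polynomial.C (a r) * Polynomial.X ^ (h-1-r.1)).coeff d
      = ∑ r : Fin h, a r * (if h-1-r.1 ≤ d then Q.coeff (d - (h-1-r.1)) else 0) := by
    intro Q a d
    rw [Finset.mul_sum, finset_sum_coeff]
    refine Finset.sum_congr rfl fun r _ => ?_
    have e1 : Q * (Polynomial.C (a r) * Polynomial.X ^ (h-1-r.1))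
        = (Polynomial.C (a r) * Q) * Polynomial.X ^ (h-1-r.1) := by ring
    rw [e1, Polynomial.coeff_mul_X_pow']
    split_ifs with hk
    · rw [coeff_C_mul]
    · rw [mul_zero]
  -- solve the two linear systems
  obtain ⟨zA, KA, NA, hKA⟩ := key h (fun n s => -((n.choose s.1 : ℂ) / (n:ℂ)^(s.1)))
      (fun s => -(1 / ((s.1).factorial : ℂ))) (fun s => (choose_div_pow_tendsto s.1).neg)
  have hKA0 : 0 ≤ KA := le_trans (norm_nonneg _) ((hKA NA le_rfl).2 ⟨0, hh⟩)
  obtain ⟨zB, KB, NB, hKB⟩ := key h (fun n s => if s.1 = 0 then 1 else 0)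
      (fun s => if s.1 = 0 then 1 else 0) (fun _s => tendsto_const_nhds)
  have hKB0 : 0 ≤ KB := le_trans (norm_nonneg _) ((hKB NB le_rfl).2 ⟨0, hh⟩)
  set aA : ℕ → Fin h → ℂ := fun n r => lam ^ (r.1+1) * (zA n r / (n:ℂ)^(r.1+1)) with haA
  set aB : ℕ → Fin h → ℂ :=
    fun n r => lam ^ ((r.1:ℤ)+1-n) * (zB n r / (n:ℂ)^(r.1+1)) with haB
  set pA : ℕ → ℂ[X] := fun n => Polynomial.X ^ h
      + ∑ r : Fin h, Polynomial.C (aA n r) * Polynomial.X ^ (h-1-r.1) with hpA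
  set pB : ℕ → ℂ[X] :=
    fun n => ∑ r : Fin h, Polynomial.C (aB n r) * Polynomial.X ^ (h-1-r.1) with hpB
  have haAbd : ∀ n, NA ≤ n → 1 ≤ n → ∀ r : Fin h,
      ‖aA n r‖ ≤ KA / (n:ℝ)^(r.1+1) := by
    intro n hn hn1 r
    have hz := (hKA n hn).2 r
    have hnp : (0:ℝ) < (n:ℝ)^(r.1+1) := by positivity
    show ‖lam ^ (r.1+1) * (zA n r / (n:ℂ)^(r.1+1))‖ ≤ _
    rw [norm_mul, norm_pow, hlam, one_pow, one_mul, norm_div, norm_pow,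
      Complex.norm_natCast]
    gcongr
  have haBbd : ∀ n, NB ≤ n → 1 ≤ n → ∀ r : Fin h,
      ‖aB n r‖ ≤ KB / (n:ℝ)^(r.1+1) := by
    intro n hn hn1 r
    have hz := (hKB n hn).2 r
    have hnp : (0:ℝ) < (n:ℝ)^(r.1+1) := by positivity
    show ‖lam ^ ((r.1:ℤ)+1-n) * (zB n r / (n:ℂ)^(r.1+1))‖ ≤ _
    rw [norm_mul, norm_zpow, hlam, _root_.one_zpow, one_mul, norm_div, norm_pow,
      Complex.norm_natCast]
    gcongr
  -- window identities
  have hwinA : ∀ n, NA ≤ n → 2*h ≤ n → ∀ d, h ≤ d → d < 2*h →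
      ((Polynomial.X + Polynomial.C lam) ^ n * pA n).coeff d = 0 := by
    intro n hn h2n d hd1 hd2
    have hn0 : (n : ℂ) ≠ 0 := Nat.cast_ne_zero.mpr (by omega)
    set s : Fin h := ⟨d - h, by omega⟩ with hs
    have hsv : s.1 = d - h := rfl
    have heq := (hKA n hn).1 s
    rw [hpA]
    simp only
    rw [mul_add, coeff_add, hmulcomb]
    have e1 : ((Polynomial.X + Polynomial.C lam) ^ n * Polynomial.X ^ h).coeff d
        = lam ^ (n - s.1) * (n.choose s.1 : ℂ) := by
      rw [Polynomial.coeff_mul_X_pow', if_pos (by omega), Polynomial.coeff_X_add_C_pow]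
    rw [e1]
    have e2 : ∀ r : Fin h, aA n r * (if h-1-r.1 ≤ d then
        ((Polynomial.X + Polynomial.C lam) ^ n).coeff (d - (h-1-r.1)) else 0)
        = lam ^ (n - s.1)
          * ((n.choose (s.1 + r.1 + 1) : ℂ) * (zA n r / (n:ℂ)^(r.1+1))) := by
      intro r
      have hr2 := r.2
      rw [if_pos (by omega), Polynomial.coeff_X_add_C_pow]
      have hidx : d - (h-1-r.1) = s.1 + r.1 + 1 := by omega
      rw [hidx]
      show lam ^ (r.1+1) * (zA n r / (n:ℂ)^(r.1+1)) * _ = _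
      have hpow : lam ^ (r.1+1) * lam ^ (n - (s.1 + r.1 + 1)) = lam ^ (n - s.1) := by
        rw [← pow_add]
        congr 1
        omega
      calc lam ^ (r.1+1) * (zA n r / (n:ℂ)^(r.1+1))
            * (lam ^ (n - (s.1+r.1+1)) * (n.choose (s.1+r.1+1) : ℂ))
          = (lam ^ (r.1+1) * lam ^ (n - (s.1+r.1+1)))
            * ((n.choose (s.1+r.1+1) : ℂ) * (zA n r / (n:ℂ)^(r.1+1))) := by ring
        _ = _ := by rw [hpow]
    rw [Finset.sum_congr rfl fun r _ => e2 r, ← Finset.mul_sum, heq]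
    have e3 : (n:ℂ)^(s.1) * -((n.choose s.1 : ℂ) / (n:ℂ)^(s.1))
        = -(n.choose s.1 : ℂ) := by
      field_simp
    rw [e3]
    ring
  have hwinB : ∀ n, NB ≤ n → 2*h ≤ n → ∀ d, h ≤ d → d < 2*h →
      ((Polynomial.X + Polynomial.C lam) ^ n * pB n).coeff d
      = (if d = h then 1 else 0) := by
    intro n hn h2n d hd1 hd2
    have hn0 : (n : ℂ) ≠ 0 := Nat.cast_ne_zero.mpr (by omega)
    set s : Fin h := ⟨d - h, by omega⟩ with hs
    have hsv : s.1 = d - h := rfl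
    have heq := (hKB n hn).1 s
    rw [hpB]
    simp only
    rw [hmulcomb]
    have e2 : ∀ r : Fin h, aB n r * (if h-1-r.1 ≤ d then
        ((Polynomial.X + Polynomial.C lam) ^ n).coeff (d - (h-1-r.1)) else 0)
        = lam ^ (-(s.1:ℤ))
          * ((n.choose (s.1 + r.1 + 1) : ℂ) * (zB n r / (n:ℂ)^(r.1+1))) := by
      intro r
      have hr2 := r.2
      rw [if_pos (by omega), Polynomial.coeff_X_add_C_pow]
      have hidx : d - (h-1-r.1) = s.1 + r.1 + 1 := by omega
      rw [hidx]
      show lam ^ ((r.1:ℤ)+1-n) * (zB n r / (n:ℂ)^(r.1+1)) * _ = _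
      have hpow : lam ^ ((r.1:ℤ)+1-n) * lam ^ (n - (s.1 + r.1 + 1)) = lam ^ (-(s.1:ℤ)) := by
        rw [← zpow_natCast lam (n - (s.1+r.1+1)), ← zpow_add₀ hlam0]
        congr 1
        have hcast : ((n - (s.1+r.1+1) : ℕ) : ℤ) = (n:ℤ) - ((s.1:ℤ)+r.1+1) := by
          rw [Nat.cast_sub (by omega)]
          push_cast
          ring
        rw [hcast]
        ring
      calc lam ^ ((r.1:ℤ)+1-n) * (zB n r / (n:ℂ)^(r.1+1))
            * (lam ^ (n - (s.1+r.1+1)) * (n.choose (s.1+r.1+1) : ℂ))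
          = (lam ^ ((r.1:ℤ)+1-n) * lam ^ (n - (s.1+r.1+1)))
            * ((n.choose (s.1+r.1+1) : ℂ) * (zB n r / (n:ℂ)^(r.1+1))) := by ring
        _ = _ := by rw [hpow]
    rw [Finset.sum_congr rfl fun r _ => e2 r, ← Finset.mul_sum, heq]
    rcases Nat.eq_zero_or_pos s.1 with hs0 | hs0
    · have hdh : d = h := by omega
      rw [if_pos hdh]
      rw [hs0]
      simp
    · have hdh : d ≠ h := by omega
      rw [if_neg hdh, if_neg (by omega)]
      simp
  -- low-degree coefficient bound
  have hlow : ∀ (n : ℕ), 1 ≤ n → ∀ (a : Fin h → ℂ) (K : ℝ), 0 ≤ K →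
      (∀ r : Fin h, ‖a r‖ ≤ K / (n:ℝ)^(r.1+1)) → ∀ d, d < h →
      ‖((Polynomial.X + Polynomial.C lam) ^ n * ∑ r : Fin h,
          Polynomial.C (a r) * Polynomial.X ^ (h-1-r.1)).coeff d‖
        ≤ h * (K / n) := by
    intro n hn1 a K hK0 ha d hd
    have hn0 : (0:ℝ) < n := by exact_mod_cast hn1
    rw [hmulcomb]
    refine le_trans (norm_sum_le _ _) ?_
    have hterm : ∀ r : Fin h, ‖a r * (if h-1-r.1 ≤ d then
        ((Polynomial.X + Polynomial.C lam) ^ n).coeff (d - (h-1-r.1)) else 0)‖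
        ≤ K / n := by
      intro r
      have hr2 := r.2
      by_cases hc : h-1-r.1 ≤ d
      · rw [if_pos hc, Polynomial.coeff_X_add_C_pow, norm_mul]
        have hern : d - (h-1-r.1) ≤ r.1 := by omega
        have hQ : ‖lam ^ (n - (d - (h-1-r.1))) * ((n.choose (d - (h-1-r.1)) : ℕ) : ℂ)‖
            ≤ (n:ℝ)^(r.1) := by
          rw [norm_mul, norm_pow, hlam, one_pow, one_mul, Complex.norm_natCast]
          calc ((n.choose (d - (h-1-r.1)) : ℕ) : ℝ) ≤ (n:ℝ)^(d - (h-1-r.1)) := by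
                exact_mod_cast Nat.choose_le_pow _ _
            _ ≤ (n:ℝ)^(r.1) := by
                refine pow_le_pow_right₀ (by exact_mod_cast hn1) hern
        calc ‖a r‖ * ‖lam ^ (n - (d - (h-1-r.1))) * ((n.choose (d - (h-1-r.1)) : ℕ) : ℂ)‖
            ≤ (K / (n:ℝ)^(r.1+1)) * (n:ℝ)^(r.1) :=
              mul_le_mul (ha r) hQ (norm_nonneg _) (by positivity)
          _ = K / n := by
              rw [pow_succ]
              field_simp
      · rw [if_neg hc, mul_zero, norm_zero]
        positivity
    refine le_trans (Finset.sum_le_sum fun r _ => hterm r) ?_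
    rw [Finset.sum_const, Finset.card_univ, Fintype.card_fin, nsmul_eq_mul]
  -- squeeze helper
  have hsq : ∀ (w : ℕ → X) (v : X) (Cc : ℝ),
      (∀ᶠ n in atTop, ‖w n - v‖ ≤ Cc / n) → Tendsto w atTop (𝓝 v) := by
    intro w v Cc hev
    rw [tendsto_iff_norm_sub_tendsto_zero]
    exact squeeze_zero' (Eventually.of_forall fun n => norm_nonneg _) hev
      (tendsto_const_div_atTop_nhds_zero_nat Cc)
  refine ⟨⟨fun n => Φ (pA n), ?_, ?_⟩, fun n => Φ (pB n), ?_, ?_⟩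
  · -- wA → S^h y
    refine hsq _ _ (KA * G) ?_
    filter_upwards [eventually_ge_atTop (max NA 1)] with n hn
    have hnA : NA ≤ n := le_trans (le_max_left _ _) hn
    have hn1 : 1 ≤ n := le_trans (le_max_right _ _) hn
    have hb : ∀ d, d < 2*h →
        ‖(pA n).coeff d - (if d = h then (1:ℂ) else 0)‖ ≤ KA / n := by
      intro d hd
      rcases lt_trichotomy d h with hdh | rfl | hdh
      · rw [if_neg (by omega), sub_zero, hpA]
        simp only [coeff_add]
        rw [Polynomial.coeff_X_pow, if_neg (by omega), hcomb_lt _ _ hdh, zero_add]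
        refine le_trans (haAbd n hnA hn1 ⟨h-1-d, by omega⟩) ?_
        have hle : (n:ℝ)^1 ≤ (n:ℝ)^(h-1-d+1) :=
          pow_le_pow_right₀ (by exact_mod_cast hn1) (by omega)
        calc KA / (n:ℝ)^(h-1-d+1) ≤ KA / (n:ℝ)^1 :=
              div_le_div_of_nonneg_left hKA0 (by positivity) hle
          _ = KA / n := by rw [pow_one]
      · rw [if_pos rfl, hpA]
        simp only [coeff_add]
        rw [Polynomial.coeff_X_pow, if_pos rfl, hcomb_ge _ _ le_rfl, add_zero]
        simp only [sub_self, norm_zero]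
        positivity
      · rw [if_neg (by omega), sub_zero, hpA]
        simp only [coeff_add]
        rw [Polynomial.coeff_X_pow, if_neg (by omega), hcomb_ge _ _ (by omega), add_zero,
          norm_zero]
        positivity
    have hbd := hbound (pA n) 1 (KA / n) hb
    rw [one_smul] at hbd
    show ‖Φ (pA n) - (S ^ h) y‖ ≤ KA * G / n
    calc ‖Φ (pA n) - (S ^ h) y‖ ≤ (KA / n) * G := hbd
      _ = KA * G / n := by ring
  · -- T^n wA → 0
    refine hsq _ _ ((h:ℝ) * KA * G) ?_
    filter_upwards [eventually_ge_atTop (max NA (2*h+1))] with n hn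
    have hnA : NA ≤ n := le_trans (le_max_left _ _) hn
    have h2n : 2*h ≤ n := by
      have := le_trans (le_max_right _ _) hn
      omega
    have hn1 : 1 ≤ n := by omega
    rw [sub_zero, hΦTn]
    have hb : ∀ d, d < 2*h →
        ‖((Polynomial.X + Polynomial.C lam) ^ n * pA n).coeff d
          - (if d = h then (0:ℂ) else 0)‖ ≤ (h:ℝ) * (KA / n) := by
      intro d hd
      rw [ite_self, sub_zero]
      rcases lt_or_ge d h with hdh | hdh
      · rw [hpA]
        simp only
        rw [mul_add, coeff_add]
        have e0 : ((Polynomial.X + Polynomial.C lam) ^ n * Polynomial.X ^ h).coeff d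
            = 0 := by
          rw [Polynomial.coeff_mul_X_pow', if_neg (by omega)]
        rw [e0, zero_add]
        exact hlow n hn1 (aA n) KA hKA0 (haAbd n hnA hn1) d hdh
      · rw [hwinA n hnA h2n d hdh hd, norm_zero]
        positivity
    have hbd := hbound _ 0 ((h:ℝ) * (KA / n)) hb
    rw [zero_smul, sub_zero] at hbd
    calc ‖Φ ((Polynomial.X + Polynomial.C lam) ^ n * pA n)‖
        ≤ ((h:ℝ) * (KA / n)) * G := hbd
      _ = (h:ℝ) * KA * G / n := by ring
  · -- wB → 0
    refine hsq _ _ (KB * G) ?_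
    filter_upwards [eventually_ge_atTop (max NB 1)] with n hn
    have hnB : NB ≤ n := le_trans (le_max_left _ _) hn
    have hn1 : 1 ≤ n := le_trans (le_max_right _ _) hn
    rw [sub_zero]
    have hb : ∀ d, d < 2*h →
        ‖(pB n).coeff d - (if d = h then (0:ℂ) else 0)‖ ≤ KB / n := by
      intro d hd
      rw [ite_self, sub_zero]
      rcases lt_or_ge d h with hdh | hdh
      · rw [hpB]
        simp only
        rw [hcomb_lt _ _ hdh]
        refine le_trans (haBbd n hnB hn1 ⟨h-1-d, by omega⟩) ?_
        have hle : (n:ℝ)^1 ≤ (n:ℝ)^(h-1-d+1) :=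
          pow_le_pow_right₀ (by exact_mod_cast hn1) (by omega)
        calc KB / (n:ℝ)^(h-1-d+1) ≤ KB / (n:ℝ)^1 :=
              div_le_div_of_nonneg_left hKB0 (by positivity) hle
          _ = KB / n := by rw [pow_one]
      · rw [hpB]
        simp only
        rw [hcomb_ge _ _ hdh, norm_zero]
        positivity
    have hbd := hbound (pB n) 0 (KB / n) hb
    rw [zero_smul, sub_zero] at hbd
    calc ‖Φ (pB n)‖ ≤ (KB / n) * G := hbd
      _ = KB * G / n := by ring
  · -- T^n wB → S^h y
    refine hsq _ _ ((h:ℝ) * KB * G) ?_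
    filter_upwards [eventually_ge_atTop (max NB (2*h+1))] with n hn
    have hnB : NB ≤ n := le_trans (le_max_left _ _) hn
    have h2n : 2*h ≤ n := by
      have := le_trans (le_max_right _ _) hn
      omega
    have hn1 : 1 ≤ n := by omega
    rw [hΦTn]
    have hb : ∀ d, d < 2*h →
        ‖((Polynomial.X + Polynomial.C lam) ^ n * pB n).coeff d
          - (if d = h then (1:ℂ) else 0)‖ ≤ (h:ℝ) * (KB / n) := by
      intro d hd
      rcases lt_or_ge d h with hdh | hdh
      · rw [if_neg (by omega), sub_zero, hpB]
        simp only
        exact hlow n hn1 (aB n) KB hKB0 (haBbd n hnB hn1) d hdh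
      · rw [hwinB n hnB h2n d hdh hd]
        simp only [sub_self, norm_zero]
        positivity
    have hbd := hbound _ 1 ((h:ℝ) * (KB / n)) hb
    rw [one_smul] at hbd
    show ‖Φ ((Polynomial.X + Polynomial.C lam) ^ n * pB n) - (S ^ h) y‖
        ≤ (h:ℝ) * KB * G / n
    calc ‖Φ ((Polynomial.X + Polynomial.C lam) ^ n * pB n) - (S ^ h) y‖
        ≤ ((h:ℝ) * (KB / n)) * G := hbd
      _ = (h:ℝ) * KB * G / n := by ring

end Stmt6Aux

/-- A bounded operator `T` on `X` is mixing: for every pair of nonempty open sets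
`U, V` there is `N` such that `T^n(U) ∩ V ≠ ∅` for all `n > N`. -/
def IsMixingOp {X : Type*} [NormedAddCommGroup X] [NormedSpace ℂ X]
    (T : X →L[ℂ] X) : Prop :=
  ∀ U V : Set X, IsOpen U → IsOpen V → U.Nonempty → V.Nonempty →
    ∃ N : ℕ, ∀ n : ℕ, N < n → ((fun v => (T ^ n) v) '' U ∩ V).Nonempty

/-- `S` is a generalised backward shift adapted to the family `x` indexed by `ι × ℕ`
(with the second index 0-based), where the index set carries the lexicographic order:
`S x^ℓ_k` is a finite linear combination of the `x^p_q` with `(p,q) <lex (ℓ,k)`, in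
which, when `k > 0`, the coefficient of the immediate predecessor `x^ℓ_{k-1}` is
nonzero.  Taking `ι = ℕ` gives the generalised backward ∞-shifts. -/
def IsGenBackwardShift {X : Type*} [NormedAddCommGroup X] [NormedSpace ℂ X]
    {ι : Type*} [Preorder ι] (S : X →L[ℂ] X) (x : ι × ℕ → X) : Prop :=
  ∀ p : ι × ℕ, ∃ c : (ι × ℕ) →₀ ℂ,
    (∀ q ∈ c.support, Prod.Lex (· < ·) (· < ·) q p) ∧
    S (x p) = c.sum (fun q a => a • x q) ∧
    (1 ≤ p.2 → c (p.1, p.2 - 1) ≠ 0)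

theorem stmt6 {X : Type*} [NormedAddCommGroup X] [NormedSpace ℂ X] [CompleteSpace X]
    [TopologicalSpace.SeparableSpace X] (hinf : ¬ FiniteDimensional ℂ X)
    (S : X →L[ℂ] X) (x : ℕ × ℕ → X)
    (hli : LinearIndependent ℂ x)
    (hdense : Dense (Submodule.span ℂ (Set.range x) : Set X))
    (hshift : IsGenBackwardShift S x)
    (lam : ℂ) (hlam : ‖lam‖ = 1) :
    IsMixingOp (lam • (1 : X →L[ℂ] X) + S) := by
  classical
  set E : Submodule ℂ X := Submodule.span ℂ (Set.range x) with hE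
  have wf : WellFounded (Prod.Lex ((· < ·) : ℕ → ℕ → Prop) ((· < ·) : ℕ → ℕ → Prop)) :=
    WellFounded.prod_lex wellFounded_lt wellFounded_lt
  have hpow0 : ∀ (v : X) (m m' : ℕ), m ≤ m' → (S^m) v = 0 → (S^m') v = 0 := by
    intro v m m' hmm hv
    have e : (S^m') v = (S^(m'-m)) ((S^m) v) := by
      rw [← ContinuousLinearMap.mul_apply, ← pow_add]
      congr 2
      omega
    rw [e, hv, map_zero]
  have hnilpx : ∀ p : ℕ × ℕ, ∃ m, (S^m) (x p) = 0 := by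
    intro p
    refine wf.induction (C := fun p => ∃ m, (S^m) (x p) = 0) p ?_
    intro p IH
    obtain ⟨c, hsupp, hSx, _⟩ := hshift p
    set f : ℕ × ℕ → ℕ :=
      fun q => if hq : Prod.Lex (· < ·) (· < ·) q p then (IH q hq).choose else 0 with hf
    set M := c.support.sup f with hM
    refine ⟨M + 1, ?_⟩
    rw [pow_succ, ContinuousLinearMap.mul_apply, hSx]
    have hsum : c.sum (fun q a => a • x q) = ∑ q ∈ c.support, c q • x q := rfl
    rw [hsum, map_sum]
    refine Finset.sum_eq_zero fun q hq => ?_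
    rw [_root_.map_smul]
    have hlex := hsupp q hq
    have h1 : (S^(f q)) (x q) = 0 := by
      have : f q = (IH q hlex).choose := by rw [hf]; simp only [dif_pos hlex]
      rw [this]
      exact (IH q hlex).choose_spec
    rw [hpow0 _ _ _ (Finset.le_sup hq) h1, smul_zero]
  have hnilp : ∀ v ∈ E, ∃ m, (S^m) v = 0 := by
    intro v hv
    refine Submodule.span_induction ?_ ?_ ?_ ?_ hv
    · rintro _ ⟨p, rfl⟩
      exact hnilpx p
    · exact ⟨0, by simp⟩
    · rintro a b _ _ ⟨m1, h1⟩ ⟨m2, h2⟩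
      exact ⟨max m1 m2, by rw [map_add, hpow0 _ _ _ (le_max_left _ _) h1,
        hpow0 _ _ _ (le_max_right _ _) h2, add_zero]⟩
    · rintro a v _ ⟨m, hm⟩
      exact ⟨m, by rw [_root_.map_smul, hm, smul_zero]⟩
  have hsurjx : ∀ p : ℕ × ℕ, x p ∈ E.map (S : X →ₗ[ℂ] X) := by
    intro p
    refine wf.induction (C := fun p => x p ∈ E.map (S : X →ₗ[ℂ] X)) p ?_
    rintro ⟨p1, p2⟩ IH
    obtain ⟨c, hsupp, hSx, hc0⟩ := hshift (p1, p2 + 1)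
    have hc0' : c (p1, p2) ≠ 0 := by
      have := hc0 (by simp)
      simpa using this
    have hmem : (p1, p2) ∈ c.support := Finsupp.mem_support_iff.mpr hc0'
    have hsum : c.sum (fun q a => a • x q)
        = c (p1,p2) • x (p1,p2) + ∑ q ∈ c.support.erase (p1,p2), c q • x q := by
      have e0 : c.sum (fun q a => a • x q) = ∑ q ∈ c.support, c q • x q := rfl
      rw [e0]
      exact (Finset.add_sum_erase _ _ hmem).symm
    have hrest : ∑ q ∈ c.support.erase (p1,p2), c q • x q ∈ E.map (S : X →ₗ[ℂ] X) := by
      refine Submodule.sum_mem _ fun q hq => ?_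
      have hqs := Finset.mem_of_mem_erase hq
      have hqne := Finset.ne_of_mem_erase hq
      have hlex : Prod.Lex (· < ·) (· < ·) q (p1, p2) := by
        have hq1 := hsupp q hqs
        obtain ⟨q1, q2⟩ := q
        rw [Prod.lex_def] at hq1 ⊢
        simp only [ne_eq, Prod.mk.injEq, not_and] at hqne
        rcases hq1 with h1 | ⟨h1, h2⟩
        · exact Or.inl h1
        · right
          refine ⟨h1, ?_⟩
          rcases Nat.lt_or_ge q2 p2 with hlt | hge
          · exact hlt
          · exfalso
            have : q2 = p2 := by omega
            exact hqne (by omega) this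
      exact Submodule.smul_mem _ _ (IH q hlex)
    have hSmem : S (x (p1, p2+1)) ∈ E.map (S : X →ₗ[ℂ] X) :=
      Submodule.mem_map_of_mem (Submodule.subset_span ⟨(p1,p2+1), rfl⟩)
    have hmain : c (p1,p2) • x (p1,p2) ∈ E.map (S : X →ₗ[ℂ] X) := by
      have e1 : c (p1,p2) • x (p1,p2)
          = S (x (p1,p2+1)) - ∑ q ∈ c.support.erase (p1,p2), c q • x q := by
        rw [hSx, hsum]
        abel
      rw [e1]
      exact Submodule.sub_mem _ hSmem hrest
    have := Submodule.smul_mem _ (c (p1,p2))⁻¹ hmain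
    rwa [inv_smul_smul₀ hc0'] at this
  have hsurj1 : ∀ v ∈ E, ∃ w ∈ E, S w = v := by
    intro v hv
    have hEle : E ≤ E.map (S : X →ₗ[ℂ] X) := by
      conv_lhs => rw [hE]
      refine Submodule.span_le.mpr ?_
      rintro _ ⟨p, rfl⟩
      exact hsurjx p
    obtain ⟨w, hw, hwv⟩ := Submodule.mem_map.mp (hEle hv)
    exact ⟨w, hw, hwv⟩
  have hsurj : ∀ (k : ℕ), ∀ v ∈ E, ∃ w ∈ E, (S^k) w = v := by
    intro k
    induction k with
    | zero => intro v hv; exact ⟨v, hv, by simp⟩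
    | succ k IH =>
      intro v hv
      obtain ⟨w1, hw1, hw1v⟩ := IH v hv
      obtain ⟨w2, hw2, hw2v⟩ := hsurj1 w1 hw1
      exact ⟨w2, hw2, by rw [pow_succ, ContinuousLinearMap.mul_apply, hw2v, hw1v]⟩
  intro U V hU hV hUne hVne
  obtain ⟨u, huE, huU⟩ := hdense.exists_mem_open hU hUne
  obtain ⟨v, hvE, hvV⟩ := hdense.exists_mem_open hV hVne
  obtain ⟨εu, hεu, hbu⟩ := Metric.isOpen_iff.mp hU u huU
  obtain ⟨εv, hεv, hbv⟩ := Metric.isOpen_iff.mp hV v hvV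
  obtain ⟨mu, hmu⟩ := hnilp u huE
  obtain ⟨mv, hmv⟩ := hnilp v hvE
  set h : ℕ := max (max mu mv) 1 with hhdef
  have hh0 : 0 < h := lt_of_lt_of_le one_pos (le_max_right _ _)
  obtain ⟨yu, _, hyu⟩ := hsurj h u huE
  obtain ⟨yv, _, hyv⟩ := hsurj h v hvE
  have hsplit : ∀ w : X, (S^(2*h)) w = (S^h) ((S^h) w) := by
    intro w
    rw [← ContinuousLinearMap.mul_apply, ← pow_add]
    congr 2
    omega
  have hyu2 : (S^(2*h)) yu = 0 := by
    rw [hsplit, hyu]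
    exact hpow0 _ _ _ (le_trans (le_max_left _ _) (le_max_left _ _)) hmu
  have hyv2 : (S^(2*h)) yv = 0 := by
    rw [hsplit, hyv]
    exact hpow0 _ _ _ (le_trans (le_max_right _ _) (le_max_left _ _)) hmv
  obtain ⟨⟨wA, hwA1, hwA2⟩, -⟩ := Stmt6Aux.tower S lam hlam h hh0 yu hyu2
  obtain ⟨-, wB, hwB1, hwB2⟩ := Stmt6Aux.tower S lam hlam h hh0 yv hyv2
  rw [hyu] at hwA1
  rw [hyv] at hwB2
  obtain ⟨N1, hN1⟩ := Metric.tendsto_atTop.mp hwA1 (εu/2) (half_pos hεu)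
  obtain ⟨N2, hN2⟩ := Metric.tendsto_atTop.mp hwA2 (εv/2) (half_pos hεv)
  obtain ⟨N3, hN3⟩ := Metric.tendsto_atTop.mp hwB1 (εu/2) (half_pos hεu)
  obtain ⟨N4, hN4⟩ := Metric.tendsto_atTop.mp hwB2 (εv/2) (half_pos hεv)
  refine ⟨N1 + N2 + N3 + N4, fun n hn => ?_⟩
  have h1 := hN1 n (by omega)
  have h2 := hN2 n (by omega)
  have h3 := hN3 n (by omega)
  have h4 := hN4 n (by omega)
  rw [dist_eq_norm] at h1 h4
  rw [dist_zero_right] at h2 h3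
  set w : X := wA n + wB n with hw
  have hwU : w ∈ U := by
    apply hbu
    rw [Metric.mem_ball, dist_eq_norm]
    have e : w - u = (wA n - u) + wB n := by rw [hw]; abel
    rw [e]
    calc ‖(wA n - u) + wB n‖ ≤ ‖wA n - u‖ + ‖wB n‖ := norm_add_le _ _
      _ < εu/2 + εu/2 := add_lt_add h1 h3
      _ = εu := by ring
  have hTV : ((lam • (1 : X →L[ℂ] X) + S) ^ n) w ∈ V := by
    apply hbv
    rw [Metric.mem_ball, dist_eq_norm]
    have e : ((lam • (1 : X →L[ℂ] X) + S) ^ n) w - v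
        = ((lam • (1 : X →L[ℂ] X) + S) ^ n) (wA n)
          + (((lam • (1 : X →L[ℂ] X) + S) ^ n) (wB n) - v) := by
      rw [hw, map_add]
      abel
    rw [e]
    calc ‖((lam • (1 : X →L[ℂ] X) + S) ^ n) (wA n)
          + (((lam • (1 : X →L[ℂ] X) + S) ^ n) (wB n) - v)‖
        ≤ ‖((lam • (1 : X →L[ℂ] X) + S) ^ n) (wA n)‖
          + ‖((lam • (1 : X →L[ℂ] X) + S) ^ n) (wB n) - v‖ := norm_add_le _ _
      _ < εv/2 + εv/2 := add_lt_add h2 h4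
      _ = εv := by ring
  exact ⟨((lam • (1 : X →L[ℂ] X) + S) ^ n) w, ⟨w, hwU, rfl⟩, hTV⟩
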